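/- For all natural numbers a, b ≥ 1 with (a,b) ≠ (1,1), gcd(a,b) = (((−4^(ab(ab+a+b))) mod ((4^(a²b) − 1)(4^(ab²) − 1))) mod 4^(ab)) − 2, where the computation is carried out in the integers and x mod y denotes the unique representative in [0, y) for y > 0. -/

import Mathlib

open Finset

private lemma pow_sub_one_dvd_int (x : ℤ) (m n : ℕ) : x^m - 1 ∣ x^(m*n) - 1 :=
  ⟨∑ i ∈ range n, (x^m)^i, by rw [pow_mul, ← geom_sum_mul]; ring⟩

private lemma sum_mod_block (f : ℕ → ℤ) (m n : ℕ) :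
    ∑ i ∈ range (m * n), f (i % n) = (m:ℤ) * ∑ j ∈ range n, f j := by
  induction m with
  | zero => simp
  | succ k ih =>
      have h : (k+1) * n = k*n + n := by ring
      rw [h, Finset.sum_range_add, ih]
      have h2 : ∀ i ∈ range n, f ((k*n + i) % n) = f i := by
        intro i hi
        rw [Nat.add_comm, Nat.add_mul_mod_self_right, Nat.mod_eq_of_lt (mem_range.mp hi)]
      rw [Finset.sum_congr rfl h2]
      push_cast; ring

private lemma sum_perm (g : ℕ → ℤ) (a n : ℕ) (hn : 0 < n) (h : Nat.Coprime a n) :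
    ∑ j ∈ range n, g (a * j % n) = ∑ k ∈ range n, g k := by
  have hinj : ∀ x ∈ range n, ∀ y ∈ range n,
      a * x % n = a * y % n → x = y := by
    intro i hi j hj hij
    have hmod : i ≡ j [MOD n] :=
      Nat.ModEq.cancel_left_of_coprime (by rw [Nat.gcd_comm]; exact h) hij
    have hi' := mem_range.mp hi
    have hj' := mem_range.mp hj
    rwa [Nat.ModEq, Nat.mod_eq_of_lt hi', Nat.mod_eq_of_lt hj'] at hmod
  have himg : (range n).image (fun j => a * j % n) = range n := by
    apply Finset.eq_of_subset_of_card_le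
    · intro x hx
      obtain ⟨j, _, rfl⟩ := mem_image.mp hx
      exact mem_range.mpr (Nat.mod_lt _ hn)
    · rw [Finset.card_image_of_injOn]
      intro x hx y hy
      exact hinj x (mem_coe.mp hx) y (mem_coe.mp hy)
  conv_rhs => rw [← himg]
  rw [Finset.sum_image hinj]


private lemma key_sum (q : ℤ) (a b : ℕ) (ha : 0 < a) (hb : 0 < b) :
    ∑ i ∈ range b, q ^ (a * i % b) =
      (Nat.gcd a b : ℤ) * ∑ k ∈ range (b / Nat.gcd a b), q ^ (Nat.gcd a b * k) := by
  set d := Nat.gcd a b with hd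
  have hd0 : 0 < d := Nat.gcd_pos_of_pos_left b ha
  set a' := a / d with ha'
  set b' := b / d with hb'
  have hae : a = d * a' := (Nat.mul_div_cancel' (Nat.gcd_dvd_left a b)).symm
  have hbe : b = d * b' := (Nat.mul_div_cancel' (Nat.gcd_dvd_right a b)).symm
  have hb'0 : 0 < b' := Nat.div_pos (Nat.le_of_dvd hb (Nat.gcd_dvd_right a b)) hd0
  have hcop : Nat.Coprime a' b' := Nat.coprime_div_gcd_div_gcd hd0
  have step1 : ∑ i ∈ range b, q ^ (a * i % b)
      = ∑ i ∈ range (d * b'), (fun j => q ^ (d * (a' * j % b'))) (i % b') := by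
    rw [show range b = range (d * b') by rw [← hbe]]
    apply Finset.sum_congr rfl
    intro i _
    have h1 : a * i % b = d * (a' * i % b') := by
      rw [hae, hbe, mul_assoc]
      exact Nat.mul_mod_mul_left d (a' * i) b'
    have h2 : a' * (i % b') % b' = a' * i % b' := (Nat.mod_modEq i b').mul_left a'
    simp only [h1, h2]
  rw [step1, sum_mod_block (fun j => q ^ (d * (a' * j % b'))) d b']
  congr 1
  exact sum_perm (fun k => q ^ (d * k)) a' b' hb'0 hcop

private lemma sixteen_bound (d : ℕ) (hd : 1 ≤ d) : 2 * (d:ℤ) + 2 ≤ 16 ^ d := by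
  induction d with
  | zero => omega
  | succ k ih =>
      rcases Nat.eq_zero_or_pos k with rfl | hk
      · norm_num
      · have := ih hk
        have h16 : (16:ℤ)^(k+1) = 16^k * 16 := pow_succ 16 k
        push_cast
        push_cast at this
        linarith

private lemma nat_lt_pow (n : ℕ) (hn : 1 ≤ n) : (n:ℤ) + 3 ≤ 4 ^ n := by
  induction n with
  | zero => omega
  | succ k ih =>
      rcases Nat.eq_zero_or_pos k with rfl | hk
      · norm_num
      · have := ih hk
        have h4 : (4:ℤ)^(k+1) = 4^k * 4 := pow_succ 4 k
        push_cast; push_cast at this; linarith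


set_option maxHeartbeats 1000000 in
theorem gcd_mod_mod_base4 (a b : ℕ) (ha : 1 ≤ a) (hb : 1 ≤ b) (hab : (a, b) ≠ (1, 1)) :
    (Nat.gcd a b : ℤ) =
      ((-(4 : ℤ) ^ (a * b * (a * b + a + b)))
          % (((4 : ℤ) ^ (a ^ 2 * b) - 1) * ((4 : ℤ) ^ (a * b ^ 2) - 1)))
        % (4 : ℤ) ^ (a * b) - 2 := by
  have hab1 : 1 ≤ a * b := Nat.mul_pos ha hb
  have habne : a * b ≠ 1 := by
    intro h
    have h1 : a = 1 := Nat.le_antisymm (h ▸ Nat.le_mul_of_pos_right a hb) ha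
    have h2 : b = 1 := Nat.le_antisymm (h ▸ Nat.le_mul_of_pos_left b ha) hb
    exact hab (by rw [h1, h2])
  have hab2 : 2 ≤ a * b := by omega
  set d := Nat.gcd a b with hd
  have hd1 : 1 ≤ d := Nat.gcd_pos_of_pos_left b ha
  have hda : d ≤ a := Nat.gcd_le_left b ha
  have hdb : d ≤ b := Nat.gcd_le_right (m := a) hb
  set q : ℤ := 4 ^ (a * b) with hq
  have hq16 : (16 : ℤ) ≤ q := by
    rw [hq]
    calc (16:ℤ) = 4 ^ 2 := by norm_num
    _ ≤ 4 ^ (a*b) := pow_le_pow_right₀ (by norm_num) hab2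
  have hq0 : (0:ℤ) ≤ q := by linarith
  have hq1 : (1:ℤ) ≤ q := by linarith
  set A : ℤ := q ^ a with hA
  set B : ℤ := q ^ b with hB
  set P : ℤ := q ^ (a * b) with hP
  set D : ℤ := q ^ d with hD
  set b' := b / d with hb'
  have hb'1 : 1 ≤ b' := by
    rw [hb']; exact Nat.div_pos (Nat.le_of_dvd hb (hd ▸ Nat.gcd_dvd_right a b)) hd1
  set H : ℤ := ∑ k ∈ range b', q ^ (d * k) with hH
  set R0 : ℤ := (A-1)*(B-1) + 1 - A - B - (d:ℤ)*(A-1)*H with hR0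
  clear_value q A B P D H R0
  -- rewrite the powers of 4 in the goal
  have e1 : (4 : ℤ) ^ (a * b * (a * b + a + b)) = P * A * B := by
    rw [hP, hA, hB, hq, ← pow_mul, ← pow_mul, ← pow_mul, ← pow_add, ← pow_add]
    congr 1; ring
  have e2 : (4 : ℤ) ^ (a ^ 2 * b) = A := by
    rw [hA, hq, ← pow_mul]; congr 1; ring
  have e3 : (4 : ℤ) ^ (a * b ^ 2) = B := by
    rw [hB, hq, ← pow_mul]; congr 1; ring
  rw [e1, e2, e3]
  -- basic bounds
  have hA16 : (16:ℤ) ≤ A := by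
    rw [hA]
    calc (16:ℤ) ≤ q := hq16
    _ = q ^ 1 := (pow_one q).symm
    _ ≤ q ^ a := pow_le_pow_right₀ hq1 ha
  have hB16 : (16:ℤ) ≤ B := by
    rw [hB]
    calc (16:ℤ) ≤ q := hq16
    _ = q ^ 1 := (pow_one q).symm
    _ ≤ q ^ b := pow_le_pow_right₀ hq1 hb
  have hDA : D ≤ A := by rw [hD, hA]; exact pow_le_pow_right₀ hq1 hda
  have hDB : D ≤ B := by rw [hD, hB]; exact pow_le_pow_right₀ hq1 hdb
  have hDd : 2*(d:ℤ) + 2 ≤ D := by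
    rw [hD]
    calc 2*(d:ℤ) + 2 ≤ 16 ^ d := sixteen_bound d hd1
    _ ≤ q ^ d := pow_le_pow_left₀ (by norm_num) hq16 d
  have hD16 : (16:ℤ) ≤ D := by
    rw [hD]
    calc (16:ℤ) ≤ q := hq16
    _ = q ^ 1 := (pow_one q).symm
    _ ≤ q ^ d := pow_le_pow_right₀ hq1 hd1
  have hH0 : (0:ℤ) ≤ H := by
    rw [hH]; exact Finset.sum_nonneg fun k _ => pow_nonneg hq0 _
  have hHD : H * (D - 1) = B - 1 := by
    rw [hH, hD, hB]
    calc (∑ k ∈ range b', q^(d*k)) * (q^d - 1)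
        = (∑ k ∈ range b', (q^d)^k) * (q^d - 1) := by
          congr 1; exact Finset.sum_congr rfl fun k _ => pow_mul q d k
      _ = (q^d)^b' - 1 := geom_sum_mul _ _
      _ = q^b - 1 := by
          rw [← pow_mul, hb', Nat.mul_div_cancel' (hd ▸ Nat.gcd_dvd_right a b)]
  -- divisibility facts
  have hPA : A - 1 ∣ P - 1 := by rw [hA, hP]; exact pow_sub_one_dvd_int q a b
  have hPB : B - 1 ∣ P - 1 := by
    rw [hB, hP, show a*b = b*a from mul_comm a b]
    exact pow_sub_one_dvd_int q b a
  have hGa : (A - 1) * (∑ i ∈ range b, q ^ (a * i)) = P - 1 := by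
    rw [hA, hP]
    calc (q^a - 1) * (∑ i ∈ range b, q^(a*i))
        = (∑ i ∈ range b, (q^a)^i) * (q^a - 1) := by
          rw [mul_comm]; congr 1
          exact Finset.sum_congr rfl (fun i _ => pow_mul q a i)
      _ = (q^a)^b - 1 := geom_sum_mul _ _
      _ = q^(a*b) - 1 := by rw [← pow_mul]
  have hkey : ∑ i ∈ range b, q ^ (a * i % b) = (d:ℤ) * H := by
    rw [hH, hb', hd]
    exact key_sum q a b ha hb
  have hdiff : (B - 1) ∣ ((∑ i ∈ range b, q ^ (a * i)) - (d:ℤ) * H) := by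
    rw [← hkey, ← Finset.sum_sub_distrib]
    apply Finset.dvd_sum
    intro i _
    obtain ⟨w, hw⟩ := pow_sub_one_dvd_int q b (a * i / b)
    refine ⟨q ^ (a * i % b) * w, ?_⟩
    rw [hB]
    have hsplit : b * (a * i / b) + a * i % b = a * i := Nat.div_add_mod (a*i) b
    calc q ^ (a*i) - q ^ (a*i % b)
        = q^(b*(a*i/b)) * q^(a*i%b) - q^(a*i%b) := by rw [← pow_add, hsplit]
      _ = (q^b - 1) * (q^(a*i%b) * w) := by linear_combination q^(a*i%b) * hw
  have hNX : (A-1)*(B-1) ∣ (P - 1) * (A*B - 1) := by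
    obtain ⟨u, hu⟩ := hPB
    obtain ⟨v, hv⟩ := hPA
    exact ⟨u*B + v, by linear_combination ((A-1)*B)*hu + (B-1)*hv⟩
  have hNY : (A-1)*(B-1) ∣ (P - 1 - (d:ℤ)*(A-1)*H) := by
    obtain ⟨w, hw⟩ := hdiff
    exact ⟨w, by linear_combination (A-1)*hw - hGa⟩
  have hdvdR : (A-1)*(B-1) ∣ (-(P*A*B) - R0) := by
    obtain ⟨x, hx⟩ := hNX
    obtain ⟨y, hy⟩ := hNY
    exact ⟨-x - y - 2, by rw [hR0]; linear_combination -hx - hy⟩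
  -- bounds on R0
  have hNpos : (0:ℤ) < (A-1)*(B-1) := mul_pos (by linarith) (by linarith)
  have hR0lt : R0 < (A-1)*(B-1) := by
    rw [hR0]
    have h0 : (0:ℤ) ≤ (d:ℤ)*(A-1)*H :=
      mul_nonneg (mul_nonneg (by positivity) (by linarith)) hH0
    linarith
  have hR0nn : (0:ℤ) ≤ R0 := by
    have key : (0:ℤ) ≤ R0 * (D - 1) := by
      have expand : R0 * (D - 1) =
          ((A-1)*(B-1) + 1 - A - B)*(D-1) - (d:ℤ)*(A-1)*(B-1) := by
        rw [hR0]; linear_combination (-(d:ℤ)*(A-1)) * hHD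
      rw [expand]
      have hAB8 : (0:ℤ) ≤ A*B - 8*A - 8*B := by
        linarith [mul_nonneg (show (0:ℤ) ≤ A-16 by linarith) (show (0:ℤ) ≤ B-16 by linarith)]
      linarith [mul_nonneg (mul_nonneg (show (0:ℤ) ≤ A-1 by linarith)
                   (show (0:ℤ) ≤ B-1 by linarith))
                   (show (0:ℤ) ≤ D - 2*(d:ℤ) - 2 by linarith),
                 mul_nonneg (show (0:ℤ) ≤ D by linarith) hAB8,
                 mul_nonneg (show (0:ℤ) ≤ A by linarith) (show (0:ℤ) ≤ D by linarith),
                 mul_nonneg (show (0:ℤ) ≤ B by linarith) (show (0:ℤ) ≤ D by linarith)]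
    by_contra hcon
    push_neg at hcon
    have : R0 * (D - 1) < 0 := mul_neg_of_neg_of_pos hcon (by linarith)
    linarith
  -- first mod
  have hmod1 : (-(P * A * B)) % ((A-1)*(B-1)) = R0 := by
    have h2 : (A-1)*(B-1) ∣ R0 - (-(P*A*B)) := by
      obtain ⟨c, hc⟩ := hdvdR
      exact ⟨-c, by linear_combination -hc⟩
    have h1 : (-(P * A * B)) % ((A-1)*(B-1)) = R0 % ((A-1)*(B-1)) :=
      Int.modEq_iff_dvd.mpr h2
    rw [h1, Int.emod_eq_of_lt hR0nn hR0lt]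
  -- second mod
  have hmod2 : R0 % q = (d:ℤ) + 2 := by
    have hqA : q ∣ A := by rw [hA]; exact dvd_pow_self q (by omega)
    have hqB : q ∣ B := by rw [hB]; exact dvd_pow_self q (by omega)
    have hqH1 : q ∣ H - 1 := by
      obtain ⟨m, hm⟩ : ∃ m, b' = m + 1 := ⟨b' - 1, by omega⟩
      rw [hH, hm, Finset.sum_range_succ']
      simp only [Nat.mul_zero, pow_zero, add_sub_cancel_right]
      apply Finset.dvd_sum
      intro i _
      exact dvd_pow_self q (Nat.mul_ne_zero (by omega) (by omega))
    have h2 : q ∣ R0 - ((d:ℤ) + 2) := by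
      obtain ⟨u, hu⟩ := hqA
      obtain ⟨v, hv⟩ := hqB
      obtain ⟨w, hw⟩ := hqH1
      refine ⟨u*B - 2*u - 2*v - (d:ℤ)*u*H + (d:ℤ)*w, ?_⟩
      rw [hR0]
      linear_combination (B - 2 - (d:ℤ)*H)*hu - 2*hv + (d:ℤ)*hw
    have h3 : ((d:ℤ) + 2) < q := by
      have h5 := nat_lt_pow (a*b) (by omega)
      have hdab : (d:ℤ) ≤ ((a*b : ℕ) : ℤ) := by
        exact_mod_cast le_trans hda (Nat.le_mul_of_pos_right a hb)
      rw [hq]; push_cast at h5 hdab ⊢; linarith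
    have h4 : (0:ℤ) ≤ (d:ℤ) + 2 := by positivity
    have h6 : R0 % q = ((d:ℤ)+2) % q := by
      apply Int.modEq_iff_dvd.mpr
      obtain ⟨c, hc⟩ := h2
      exact ⟨-c, by linear_combination -hc⟩
    rw [h6, Int.emod_eq_of_lt h4 h3]
  rw [hmod1, hmod2]
  ring
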